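/- Consider the path graphical game on players U_{−1}, V_{−1}, U_0, V_0, U_1, V_1, …, U_{k−1}, V_{k−1}, U_k described in the context, with parameters x', x'' and A_1, …, A_{k−1}. In every Nash equilibrium of this game: v_{−1} = v_0 = v_1 = ⋯ = v_{k−1} = 1/2, u_0 = (x''−x')u_{−1} + x' (hence u_0 ∈ [x', x'']), u_1 = u_0/(u_0+1), and u_{i+1} = 1/(2 − u_i) for i = 1, …, k−1. -/
import Mathlib


noncomputable section

/-- Nash equilibrium condition for the graphical game on the path
`U₋₁ V₋₁ U₀ V₀ U₁ V₁ … U_{k−1} V_{k−1} U_k`.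
Here `um`, `vm` are the strategies of `U₋₁` and `V₋₁`, while `u i` (`0 ≤ i ≤ k`)
and `v i` (`0 ≤ i ≤ k−1`) are the strategies of `Uᵢ` and `Vᵢ`.
The payoffs are:
* `U₋₁` gets payoff identically `0` (its Nash conditions are vacuous);
* `V₋₁` gets expected payoff `0` for action 0, `u 0 − (x''−x')·um − x'` for action 1;
* `V₀` gets `0` for action 0 and `u 1·(u 0 + 1) − u 0` for action 1;
* for `1 ≤ i ≤ k−1`, `Vᵢ` gets `Aᵢ uᵢ u_{i+1} − Aᵢ u_{i+1}` for action 0 and that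
  plus `u_{i+1}·(2 − uᵢ) − 1` for action 1;
* for `0 ≤ i ≤ k`, `Uᵢ` gets `1` iff its action differs from that of `V_{i−1}`,
  so its expected payoffs are `v_{i−1}` for action 0 and `1 − v_{i−1}` for action 1
  (with `V_{−1}`'s strategy `vm` when `i = 0`). -/
def IsNashPath (k : ℕ) (x' x'' : ℚ) (A : ℕ → ℝ)
    (um vm : ℝ) (u v : ℕ → ℝ) : Prop :=
  um ∈ Set.Icc (0:ℝ) 1 ∧ vm ∈ Set.Icc (0:ℝ) 1 ∧
  (∀ i ≤ k, u i ∈ Set.Icc (0:ℝ) 1) ∧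
  (∀ i ≤ k - 1, v i ∈ Set.Icc (0:ℝ) 1) ∧
  (0 < vm → 0 ≤ u 0 - ((x'':ℝ) - (x':ℝ)) * um - (x':ℝ)) ∧
  (vm < 1 → u 0 - ((x'':ℝ) - (x':ℝ)) * um - (x':ℝ) ≤ 0) ∧
  (0 < v 0 → 0 ≤ u 1 * (u 0 + 1) - u 0) ∧
  (v 0 < 1 → u 1 * (u 0 + 1) - u 0 ≤ 0) ∧
  (∀ i, 1 ≤ i → i ≤ k - 1 →
    (0 < v i → A i * u i * u (i+1) - A i * u (i+1) ≤
        A i * u i * u (i+1) - A i * u (i+1) + u (i+1) * (2 - u i) - 1) ∧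
    (v i < 1 → A i * u i * u (i+1) - A i * u (i+1) + u (i+1) * (2 - u i) - 1 ≤
        A i * u i * u (i+1) - A i * u (i+1))) ∧
  (∀ i ≤ k,
    (0 < u i → (if i = 0 then vm else v (i-1)) ≤ 1 - (if i = 0 then vm else v (i-1))) ∧
    (u i < 1 → 1 - (if i = 0 then vm else v (i-1)) ≤ (if i = 0 then vm else v (i-1))))

theorem nash_structure_path (k : ℕ) (hk : 2 ≤ k) (x' x'' : ℚ)
    (hx1 : 0 < x') (hx2 : x' < x'') (hx3 : x'' < 1)
    (A : ℕ → ℝ) (um vm : ℝ) (u v : ℕ → ℝ)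
    (hN : IsNashPath k x' x'' A um vm u v) :
    vm = 1/2 ∧ (∀ i ≤ k - 1, v i = 1/2) ∧
    u 0 = ((x'':ℝ) - (x':ℝ)) * um + (x':ℝ) ∧
    u 0 ∈ Set.Icc (x' : ℝ) (x'' : ℝ) ∧
    u 1 = u 0 / (u 0 + 1) ∧
    (∀ i, 1 ≤ i → i ≤ k - 1 → u (i + 1) = 1 / (2 - u i)) := by
  obtain ⟨hum, hvm, hu, hv, hVm1, hVm2, hV01, hV02, hVi, hU⟩ := hN
  have hx1' : (0:ℝ) < x' := by exact_mod_cast hx1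
  have hx2' : (x':ℝ) < x'' := by exact_mod_cast hx2
  have hx3' : (x'':ℝ) < 1 := by exact_mod_cast hx3
  have hk1 : (1:ℕ) ≤ k - 1 := by omega
  -- vm = 1/2
  have hvm2 : vm = 1/2 := by
    by_contra h
    rcases lt_or_gt_of_ne h with hlt | hgt
    · have hu0 : u 0 = 1 := by
        by_contra h0
        have h01 : u 0 < 1 := lt_of_le_of_ne (hu 0 (by omega)).2 h0
        have h2 := (hU 0 (by omega)).2 h01
        norm_num at h2
        linarith
      have h3 := hVm2 (by linarith)
      nlinarith [hum.1, hum.2]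
    · have hu0 : u 0 = 0 := by
        by_contra h0
        have h01 : 0 < u 0 := lt_of_le_of_ne (hu 0 (by omega)).1 (Ne.symm h0)
        have h2 := (hU 0 (by omega)).1 h01
        norm_num at h2
        linarith
      have h3 := hVm1 (by linarith)
      nlinarith [hum.1, hum.2]
  -- u 0 equation
  have hu0eq : u 0 = ((x'':ℝ) - (x':ℝ)) * um + (x':ℝ) := by
    have h1 := hVm1 (by rw [hvm2]; norm_num)
    have h2 := hVm2 (by rw [hvm2]; norm_num)
    linarith
  have hu0mem : u 0 ∈ Set.Icc (x' : ℝ) (x'' : ℝ) := by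
    constructor
    · rw [hu0eq]; nlinarith [hum.1]
    · rw [hu0eq]; nlinarith [hum.2]
  have hu0pos : 0 < u 0 := lt_of_lt_of_le hx1' hu0mem.1
  -- v 0 = 1/2
  have hv02 : v 0 = 1/2 := by
    by_contra h
    rcases lt_or_gt_of_ne h with hlt | hgt
    · have hu1 : u 1 = 1 := by
        by_contra h0
        have h01 : u 1 < 1 := lt_of_le_of_ne (hu 1 (by omega)).2 h0
        have h2 := (hU 1 (by omega)).2 h01
        norm_num at h2
        linarith
      have h3 := hV02 (by linarith)
      rw [hu1] at h3
      linarith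
    · have hu1 : u 1 = 0 := by
        by_contra h0
        have h01 : 0 < u 1 := lt_of_le_of_ne (hu 1 (by omega)).1 (Ne.symm h0)
        have h2 := (hU 1 (by omega)).1 h01
        norm_num at h2
        linarith
      have h3 := hV01 (by linarith)
      rw [hu1] at h3
      linarith
  -- u 1 equation
  have hu1eq : u 1 = u 0 / (u 0 + 1) := by
    have h1 := hV01 (by rw [hv02]; norm_num)
    have h2 := hV02 (by rw [hv02]; norm_num)
    have h3 : u 1 * (u 0 + 1) = u 0 := by linarith
    field_simp
    linarith
  -- step lemma
  have step : ∀ i, 1 ≤ i → i ≤ k - 1 → u i < 1 →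
      v i = 1/2 ∧ u (i+1) = 1/(2 - u i) ∧ u (i+1) < 1 := by
    intro i h1 h2 huilt
    have hui1 : i + 1 ≤ k := by omega
    have hUi := hU (i+1) hui1
    have hne : ¬ (i + 1 = 0) := by omega
    simp only [if_neg hne, Nat.add_sub_cancel] at hUi
    have hvi12 : v i = 1/2 := by
      by_contra h
      rcases lt_or_gt_of_ne h with hlt | hgt
      · have hu1 : u (i+1) = 1 := by
          by_contra h0
          have h01 : u (i+1) < 1 := lt_of_le_of_ne (hu (i+1) hui1).2 h0
          have h2' := hUi.2 h01
          linarith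
        have h3 := (hVi i h1 h2).2 (by linarith)
        rw [hu1] at h3
        linarith
      · have hu1 : u (i+1) = 0 := by
          by_contra h0
          have h01 : 0 < u (i+1) := lt_of_le_of_ne (hu (i+1) hui1).1 (Ne.symm h0)
          have h2' := hUi.1 h01
          linarith
        have h3 := (hVi i h1 h2).1 (by linarith)
        rw [hu1] at h3
        linarith
    have h2u : (0:ℝ) < 2 - u i := by linarith
    have heq : u (i+1) * (2 - u i) = 1 := by
      have a := (hVi i h1 h2).1 (by rw [hvi12]; norm_num)
      have b := (hVi i h1 h2).2 (by rw [hvi12]; norm_num)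
      linarith
    have heq2 : u (i+1) = 1 / (2 - u i) := by
      field_simp
      linarith
    refine ⟨hvi12, heq2, ?_⟩
    rw [heq2, div_lt_one h2u]
    linarith
  have hu1lt : u 1 < 1 := by
    rw [hu1eq, div_lt_one (by linarith)]
    linarith
  have main : ∀ i, 1 ≤ i → i ≤ k - 1 →
      u i < 1 ∧ v i = 1/2 ∧ u (i+1) = 1/(2 - u i) := by
    intro i
    induction i with
    | zero => intro h; omega
    | succ n ih =>
      intro h1 h2
      by_cases hn : n = 0
      · subst hn
        obtain ⟨a, b, c⟩ := step 1 le_rfl h2 hu1lt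
        exact ⟨hu1lt, a, b⟩
      · have hn1 : 1 ≤ n := by omega
        obtain ⟨ha, hb, hc⟩ := ih hn1 (by omega)
        have hlt : u (n+1) < 1 := (step n hn1 (by omega) ha).2.2
        obtain ⟨a, b, c⟩ := step (n+1) (by omega) h2 hlt
        exact ⟨hlt, a, b⟩
  refine ⟨hvm2, ?_, hu0eq, hu0mem, hu1eq, ?_⟩
  · intro i hi
    rcases Nat.eq_zero_or_pos i with h0 | h0
    · rw [h0]; exact hv02
    · exact (main i h0 hi).2.1
  · intro i h1 h2
    exact (main i h1 h2).2.2
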